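/- Let G be a (2 × 3)-game and define Y⁽¹⁾_k = X¹ 1 k − X¹ 2 k for k ∈ Fin 3 and Y⁽²⁾_i(k,l) = X² i k − X² i l for i ∈ Fin 2 and distinct k, l ∈ Fin 3. Suppose Y⁽¹⁾_1 > 0, Y⁽¹⁾_2 > 0, Y⁽¹⁾_3 < 0, Y⁽²⁾_1(1,2) < 0, Y⁽²⁾_1(1,3) < 0, Y⁽²⁾_1(2,3) > 0, Y⁽²⁾_2(1,2) > 0, Y⁽²⁾_2(1,3) > 0, Y⁽²⁾_2(2,3) < 0, and Y⁽²⁾_2(1,3)·Y⁽²⁾_1(2,3) < Y⁽²⁾_1(1,3)·Y⁽²⁾_2(2,3). Then the correlated equilibrium polytope P_G has maximal dimension 5, i.e. the dimension of the direction of its affine span equals 5. -/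

import Mathlib

/-- The correlated equilibrium polytope of a `(2 × 3)`-game. -/
def CorrelatedEqPolytope (X1 X2 : Fin 2 → Fin 3 → ℝ) :
    Set (Fin 2 → Fin 3 → ℝ) :=
  {p | (∀ j k, 0 ≤ p j k) ∧ (∑ j, ∑ k, p j k = 1) ∧
    (∀ k l : Fin 2, 0 ≤ ∑ j, (X1 k j - X1 l j) * p k j) ∧
    (∀ k l : Fin 3, 0 ≤ ∑ i, (X2 i k - X2 i l) * p i k)}

noncomputable def sumL : (Fin 2 → Fin 3 → ℝ) →ₗ[ℝ] ℝ where
  toFun q := ∑ j, ∑ k, q j k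
  map_add' x y := by simp [Finset.sum_add_distrib]
  map_smul' c x := by simp [Finset.mul_sum, mul_add]

lemma sumL_apply (q : Fin 2 → Fin 3 → ℝ) : sumL q = ∑ j, ∑ k, q j k := rfl

lemma sumL_surj : Function.Surjective sumL := by
  intro r
  refine ⟨fun _ _ => r/6, ?_⟩
  show ∑ _j : Fin 2, ∑ _k : Fin 3, r/6 = r
  simp; ring

lemma finrank_ker_sumL : Module.finrank ℝ (LinearMap.ker sumL) = 5 := by
  have h := LinearMap.finrank_range_add_finrank_ker sumL
  rw [LinearMap.range_eq_top.mpr sumL_surj] at h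
  have h2 : Module.finrank ℝ (Fin 2 → Fin 3 → ℝ) = 6 := by
    simp [Module.finrank_pi_fintype]
  rw [h2] at h
  simp at h; omega

/-- the open set of strictly feasible points -/
def StrictSet (X1 X2 : Fin 2 → Fin 3 → ℝ) : Set (Fin 2 → Fin 3 → ℝ) :=
  {q | (∀ j k, 0 < q j k) ∧
    (∀ k l : Fin 2, k ≠ l → 0 < ∑ j, (X1 k j - X1 l j) * q k j) ∧
    (∀ k l : Fin 3, k ≠ l → 0 < ∑ i, (X2 i k - X2 i l) * q i k)}

lemma isOpen_strictSet (X1 X2 : Fin 2 → Fin 3 → ℝ) : IsOpen (StrictSet X1 X2) := by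
  have hc : ∀ j k, Continuous fun q : Fin 2 → Fin 3 → ℝ => q j k :=
    fun j k => (continuous_apply k).comp (continuous_apply j)
  have h1 : IsOpen {q : Fin 2 → Fin 3 → ℝ | ∀ j k, 0 < q j k} := by
    have : {q : Fin 2 → Fin 3 → ℝ | ∀ j k, 0 < q j k} = ⋂ j, ⋂ k, {q | 0 < q j k} := by
      ext q; simp
    rw [this]
    exact isOpen_iInter_of_finite fun j => isOpen_iInter_of_finite fun k =>
      isOpen_lt continuous_const (hc j k)
  have h2 : IsOpen {q : Fin 2 → Fin 3 → ℝ |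
      ∀ k l : Fin 2, k ≠ l → 0 < ∑ j, (X1 k j - X1 l j) * q k j} := by
    have : {q : Fin 2 → Fin 3 → ℝ | ∀ k l : Fin 2, k ≠ l → 0 < ∑ j, (X1 k j - X1 l j) * q k j}
        = ⋂ k, ⋂ l, {q | k ≠ l → 0 < ∑ j, (X1 k j - X1 l j) * q k j} := by
      ext q; simp
    rw [this]
    refine isOpen_iInter_of_finite fun k => isOpen_iInter_of_finite fun l => ?_
    by_cases h : k = l
    · simp [h]
    · have : {q : Fin 2 → Fin 3 → ℝ | k ≠ l → 0 < ∑ j, (X1 k j - X1 l j) * q k j}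
          = {q | 0 < ∑ j, (X1 k j - X1 l j) * q k j} := by
        ext q; simp [h]
      rw [this]
      exact isOpen_lt continuous_const
        (continuous_finset_sum _ fun j _ => continuous_const.mul (hc k j))
  have h3 : IsOpen {q : Fin 2 → Fin 3 → ℝ |
      ∀ k l : Fin 3, k ≠ l → 0 < ∑ i, (X2 i k - X2 i l) * q i k} := by
    have : {q : Fin 2 → Fin 3 → ℝ | ∀ k l : Fin 3, k ≠ l → 0 < ∑ i, (X2 i k - X2 i l) * q i k}
        = ⋂ k, ⋂ l, {q | k ≠ l → 0 < ∑ i, (X2 i k - X2 i l) * q i k} := by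
      ext q; simp
    rw [this]
    refine isOpen_iInter_of_finite fun k => isOpen_iInter_of_finite fun l => ?_
    by_cases h : k = l
    · simp [h]
    · have : {q : Fin 2 → Fin 3 → ℝ | k ≠ l → 0 < ∑ i, (X2 i k - X2 i l) * q i k}
          = {q | 0 < ∑ i, (X2 i k - X2 i l) * q i k} := by
        ext q; simp [h]
      rw [this]
      exact isOpen_lt continuous_const
        (continuous_finset_sum _ fun i _ => continuous_const.mul (hc i k))
  have : StrictSet X1 X2 = ({q : Fin 2 → Fin 3 → ℝ | ∀ j k, 0 < q j k} ∩
      {q : Fin 2 → Fin 3 → ℝ | ∀ k l : Fin 2, k ≠ l → 0 < ∑ j, (X1 k j - X1 l j) * q k j}) ∩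
      {q : Fin 2 → Fin 3 → ℝ | ∀ k l : Fin 3, k ≠ l → 0 < ∑ i, (X2 i k - X2 i l) * q i k} := by
    ext q
    simp only [StrictSet, Set.mem_inter_iff, Set.mem_setOf_eq, and_assoc]
  rw [this]
  exact (h1.inter h2).inter h3

lemma strict_mem_polytope (X1 X2 : Fin 2 → Fin 3 → ℝ) (q : Fin 2 → Fin 3 → ℝ)
    (hq : q ∈ StrictSet X1 X2) (hsum : ∑ j, ∑ k, q j k = 1) :
    q ∈ CorrelatedEqPolytope X1 X2 := by
  obtain ⟨hpos, hP1, hP2⟩ := hq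
  refine ⟨fun j k => (hpos j k).le, hsum, fun k l => ?_, fun k l => ?_⟩
  · by_cases h : k = l
    · subst h; simp
    · exact (hP1 k l h).le
  · by_cases h : k = l
    · subst h; simp
    · exact (hP2 k l h).le

set_option maxHeartbeats 1000000 in
lemma witness_lemma
    (X1 X2 : Fin 2 → Fin 3 → ℝ)
    (Y : Fin 3 → ℝ) (Z : Fin 2 → Fin 3 → Fin 3 → ℝ)
    (hY : ∀ k, Y k = X1 0 k - X1 1 k)
    (hZ : ∀ i k l, Z i k l = X2 i k - X2 i l)
    (h1 : 0 < Y 0) (h2 : 0 < Y 1) (h3 : Y 2 < 0)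
    (h4 : Z 0 0 1 < 0) (h5 : Z 0 0 2 < 0) (h6 : 0 < Z 0 1 2)
    (h7 : 0 < Z 1 0 1) (h8 : 0 < Z 1 0 2) (h9 : Z 1 1 2 < 0)
    (h10 : Z 1 0 2 * Z 0 1 2 < Z 0 0 2 * Z 1 1 2) :
    ∃ p : Fin 2 → Fin 3 → ℝ, (∀ j k, 0 < p j k) ∧ (∑ j, ∑ k, p j k = 1) ∧
      (∀ k l : Fin 2, k ≠ l → 0 < ∑ j, (X1 k j - X1 l j) * p k j) ∧
      (∀ k l : Fin 3, k ≠ l → 0 < ∑ i, (X2 i k - X2 i l) * p i k) := by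
  obtain ⟨m, hm, hmeq⟩ : ∃ m, 0 < m ∧ Y 2 = -m := ⟨-Y 2, by linarith, by ring⟩
  obtain ⟨a, ha, haeq⟩ : ∃ a, 0 < a ∧ Z 1 0 1 = a := ⟨_, h7, rfl⟩
  obtain ⟨b, hb, hbeq⟩ : ∃ b, 0 < b ∧ Z 0 0 1 = -b := ⟨-Z 0 0 1, by linarith, by ring⟩
  obtain ⟨c, hc, hceq⟩ : ∃ c, 0 < c ∧ Z 1 0 2 = c := ⟨_, h8, rfl⟩
  obtain ⟨d, hd, hdeq⟩ : ∃ d, 0 < d ∧ Z 0 0 2 = -d := ⟨-Z 0 0 2, by linarith, by ring⟩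
  obtain ⟨e, he, heeq⟩ : ∃ e, 0 < e ∧ Z 0 1 2 = e := ⟨_, h6, rfl⟩
  obtain ⟨f, hf, hfeq⟩ : ∃ f, 0 < f ∧ Z 1 1 2 = -f := ⟨-Z 1 1 2, by linarith, by ring⟩
  rw [hceq, hdeq, heeq, hfeq] at h10
  have hcedf : c * e < d * f := by nlinarith
  have hefdc : e / f < d / c := (div_lt_div_iff₀ hf hc).mpr (by nlinarith)
  obtain ⟨r, hr0, hr1, hr2⟩ : ∃ x, 0 < x ∧ e < x * f ∧ x * c < d := by
    refine ⟨(e/f + d/c)/2, by positivity, ?_, ?_⟩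
    · exact (div_lt_iff₀ hf).mp (by linarith)
    · exact (lt_div_iff₀ hc).mp (by linarith)
  obtain ⟨q01, hq01, hq01Y⟩ : ∃ x, 0 < x ∧ Y 1 * x = m + Y 1 :=
    ⟨m / Y 1 + 1, by positivity, by field_simp⟩
  obtain ⟨q10, hq10, hq10Y⟩ : ∃ x, 0 < x ∧ Y 0 * x = m * r / 2 :=
    ⟨m * r / (2 * Y 0), by positivity, by field_simp⟩
  obtain ⟨q11, hq11, hq11a, hq11f, hq11Y⟩ :
      ∃ x, 0 < x ∧ x * a < b * q01 ∧ x * f < e * q01 ∧ Y 1 * x < m * r / 2 := by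
    set M := min (min (b * q01 / a) (e * q01 / f)) (m * r / (2 * Y 1)) with hM_def
    have hM : 0 < M := by positivity
    refine ⟨M / 2, by positivity, ?_, ?_, ?_⟩
    · exact (lt_div_iff₀ ha).mp (lt_of_lt_of_le (half_lt_self hM)
        (le_trans (min_le_left _ _) (min_le_left _ _)))
    · exact (lt_div_iff₀ hf).mp (lt_of_lt_of_le (half_lt_self hM)
        (le_trans (min_le_left _ _) (min_le_right _ _)))
    · have h := lt_of_lt_of_le (half_lt_self hM) (min_le_right _ _)
      have := (lt_div_iff₀ (by positivity : (0:ℝ) < 2 * Y 1)).mp h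
      nlinarith
  obtain ⟨q00, hq00, hq00b, hq00d⟩ :
      ∃ x, 0 < x ∧ x * b < a * q10 ∧ x * d < c * q10 := by
    set N := min (a * q10 / b) (c * q10 / d) with hN_def
    have hN : 0 < N := by positivity
    exact ⟨N / 2, by positivity,
      (lt_div_iff₀ hb).mp (lt_of_lt_of_le (half_lt_self hN) (min_le_left _ _)),
      (lt_div_iff₀ hd).mp (lt_of_lt_of_le (half_lt_self hN) (min_le_right _ _))⟩
  obtain ⟨S, hS_def⟩ : ∃ S : ℝ, S = q00 + q01 + 1 + (q10 + q11 + r) := ⟨_, rfl⟩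
  have hS : 0 < S := by rw [hS_def]; positivity
  have key : ∀ x y : ℝ, 0 < x → x / S = y → 0 < y := fun x y hx hxy => hxy ▸ div_pos hx hS
  obtain ⟨Q, hQ_def⟩ : ∃ Q : Fin 2 → Fin 3 → ℝ, Q = ![![q00, q01, 1], ![q10, q11, r]] := ⟨_, rfl⟩
  have e00 : Q 0 0 = q00 := by rw [hQ_def]; rfl
  have e01 : Q 0 1 = q01 := by rw [hQ_def]; rfl
  have e02 : Q 0 2 = 1 := by rw [hQ_def]; rfl
  have e10 : Q 1 0 = q10 := by rw [hQ_def]; rfl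
  have e11 : Q 1 1 = q11 := by rw [hQ_def]; rfl
  have e12 : Q 1 2 = r := by rw [hQ_def]; rfl
  refine ⟨fun j k => Q j k / S, ?_, ?_, ?_, ?_⟩
  · intro j k
    fin_cases j <;> fin_cases k <;>
      simp only [Fin.zero_eta, Fin.mk_one, Fin.reduceFinMk, e00, e01, e02, e10, e11, e12] <;>
      positivity
  · rw [Fin.sum_univ_two, Fin.sum_univ_three, Fin.sum_univ_three]
    simp only [e00, e01, e02, e10, e11, e12]
    rw [hS_def]
    field_simp
  · intro k l hkl
    have w0 := hY 0; have w1 := hY 1; have w2 := hY 2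
    fin_cases k <;> fin_cases l <;> rw [Fin.sum_univ_three] <;>
      simp only [Fin.zero_eta, Fin.mk_one, Fin.reduceFinMk, e00, e01, e02, e10, e11, e12]
    · exact absurd rfl hkl
    · refine key (Y 0 * q00 + Y 1 * q01 - m) _ ?_
        (by rw [show X1 0 0 - X1 1 0 = Y 0 from w0.symm,
                show X1 0 1 - X1 1 1 = Y 1 from w1.symm,
                show X1 0 2 - X1 1 2 = -m by rw [← w2, hmeq]]; ring)
      have := mul_pos h1 hq00; linarith
    · refine key (m * r - Y 0 * q10 - Y 1 * q11) _ ?_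
        (by rw [show X1 1 0 - X1 0 0 = -Y 0 by linarith,
                show X1 1 1 - X1 0 1 = -Y 1 by linarith,
                show X1 1 2 - X1 0 2 = m by rw [w2] at hmeq; linarith]; ring)
      linarith
    · exact absurd rfl hkl
  · intro k l hkl
    have z001 : X2 0 0 - X2 0 1 = -b := by rw [← hZ]; exact hbeq
    have z101 : X2 1 0 - X2 1 1 = a := by rw [← hZ]; exact haeq
    have z002 : X2 0 0 - X2 0 2 = -d := by rw [← hZ]; exact hdeq
    have z102 : X2 1 0 - X2 1 2 = c := by rw [← hZ]; exact hceq
    have z012 : X2 0 1 - X2 0 2 = e := by rw [← hZ]; exact heeq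
    have z112 : X2 1 1 - X2 1 2 = -f := by rw [← hZ]; exact hfeq
    fin_cases k <;> fin_cases l <;> rw [Fin.sum_univ_two] <;>
      simp only [Fin.zero_eta, Fin.mk_one, Fin.reduceFinMk, e00, e01, e02, e10, e11, e12]
    · exact absurd rfl hkl
    · exact key (a * q10 - b * q00) _ (by linarith) (by rw [z001, z101]; ring)
    · exact key (c * q10 - d * q00) _ (by linarith) (by rw [z002, z102]; ring)
    · exact key (b * q01 - a * q11) _ (by linarith)
        (by rw [show X2 0 1 - X2 0 0 = b by linarith, show X2 1 1 - X2 1 0 = -a by linarith]; ring)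
    · exact absurd rfl hkl
    · exact key (e * q01 - f * q11) _ (by linarith) (by rw [z012, z112]; ring)
    · exact key (d - c * r) _ (by linarith)
        (by rw [show X2 0 2 - X2 0 0 = d by linarith, show X2 1 2 - X2 1 0 = -c by linarith]; ring)
    · exact key (f * r - e) _ (by linarith)
        (by rw [show X2 0 2 - X2 0 1 = -e by linarith, show X2 1 2 - X2 1 1 = f by linarith]; ring)
    · exact absurd rfl hkl


/-- A sign pattern on the payoff differences of a `(2 × 3)`-game (one basic
semialgebraic piece of the region of full-dimensionality) forces the correlated
equilibrium polytope to have maximal dimension `5`. -/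
theorem maximal_dim_of_sign_pattern_2x3
    (X1 X2 : Fin 2 → Fin 3 → ℝ)
    (Y : Fin 3 → ℝ) (Z : Fin 2 → Fin 3 → Fin 3 → ℝ)
    (hY : ∀ k, Y k = X1 0 k - X1 1 k)
    (hZ : ∀ i k l, Z i k l = X2 i k - X2 i l)
    (h1 : 0 < Y 0) (h2 : 0 < Y 1) (h3 : Y 2 < 0)
    (h4 : Z 0 0 1 < 0) (h5 : Z 0 0 2 < 0) (h6 : 0 < Z 0 1 2)
    (h7 : 0 < Z 1 0 1) (h8 : 0 < Z 1 0 2) (h9 : Z 1 1 2 < 0)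
    (h10 : Z 1 0 2 * Z 0 1 2 < Z 0 0 2 * Z 1 1 2) :
    Module.finrank ℝ (affineSpan ℝ (CorrelatedEqPolytope X1 X2)).direction = 5 := by

  obtain ⟨p, hppos, hpsum, hpP1, hpP2⟩ :=
    witness_lemma X1 X2 Y Z hY hZ h1 h2 h3 h4 h5 h6 h7 h8 h9 h10
  have hpS : p ∈ StrictSet X1 X2 := ⟨hppos, hpP1, hpP2⟩
  have hpP : p ∈ CorrelatedEqPolytope X1 X2 := strict_mem_polytope _ _ p hpS hpsum
  have hdir : (affineSpan ℝ (CorrelatedEqPolytope X1 X2)).direction = LinearMap.ker sumL := by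
    apply le_antisymm
    · rw [direction_affineSpan, vectorSpan_def]
      refine Submodule.span_le.mpr ?_
      rintro x hx
      rw [Set.mem_vsub] at hx
      obtain ⟨u, hu, w, hw, rfl⟩ := hx
      have hx0 : sumL (u -ᵥ w) = 0 := by
        have : u -ᵥ w = u - w := rfl
        rw [this, map_sub, sumL_apply, sumL_apply, hu.2.1, hw.2.1, sub_self]
      exact LinearMap.mem_ker.mpr hx0
    · intro v hv
      have hv0 : ∑ j, ∑ k, v j k = 0 := LinearMap.mem_ker.mp hv
      have hcont : Continuous fun t : ℝ => p + t • v := by continuity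
      have hmem : (fun t : ℝ => p + t • v) ⁻¹' StrictSet X1 X2 ∈ nhds (0:ℝ) := by
        apply hcont.continuousAt.preimage_mem_nhds
        apply (isOpen_strictSet X1 X2).mem_nhds
        simpa using hpS
      obtain ⟨δ, hδ, hball⟩ := Metric.mem_nhds_iff.mp hmem
      have hεpos : 0 < δ/2 := by positivity
      have hεS : p + (δ/2) • v ∈ StrictSet X1 X2 := by
        have : (δ/2) ∈ Metric.ball (0:ℝ) δ := by
          rw [Metric.mem_ball, Real.dist_eq, sub_zero, abs_of_pos hεpos]
          linarith
        exact hball this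
      have hsum2 : ∑ j, ∑ k, (p + (δ/2) • v) j k = 1 := by
        have : ∑ j, ∑ k, (p + (δ/2) • v) j k
            = (∑ j, ∑ k, p j k) + (δ/2) * ∑ j, ∑ k, v j k := by
          simp [Finset.sum_add_distrib, Finset.mul_sum, mul_add]
        rw [this, hpsum, hv0, mul_zero, add_zero]
      have hmem2 := strict_mem_polytope X1 X2 _ hεS hsum2
      have hu1 := subset_affineSpan ℝ _ hpP
      have hu2 := subset_affineSpan ℝ _ hmem2
      have hvd := AffineSubspace.vsub_mem_direction hu2 hu1
      have hveq : (p + (δ/2) • v) -ᵥ p = (δ/2) • v := by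
        rw [vsub_eq_sub, add_sub_cancel_left]
      rw [hveq] at hvd
      have hsm := Submodule.smul_mem _ (δ/2)⁻¹ hvd
      rwa [smul_smul, inv_mul_cancel₀ hεpos.ne', one_smul] at hsm
  rw [hdir, finrank_ker_sumL]
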